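/- arXiv:2512.14466 — 4 statements merged into one kernel-verified Lean document; each statement's English description precedes it below -/
import Mathlib

section
/- Let G be a game position on a finite digraph with gray (entailing) nodes whose options are already assigned. Then the set C(G) of covered values of G (the set of k with Cr(G,k) = true) is either finite or of the form ℤ≥0 \ F for a finite set F. -/
/-- A game position with all options previously assigned: a white node
carries its (already assigned) Grundy value; a gray (entailing) node
carries its list of options. -/
inductive EGame where
  | white (g : ℕ)
  | gray (opts : List EGame)

/-- `crOk G' k` says that option `G'` is satisfactory in the definition of
`Cr`: a white option with Grundy value `≠ k`, or a gray option with
`Cr G' k = false`.  (For a gray `G'`, `Cr G' k = isEmpty ∨ all crOk`.) -/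
def crOk : EGame → ℕ → Bool
  | .white g, k => g != k
  | .gray opts, k => !(opts.isEmpty || opts.attach.all fun ⟨G', _⟩ => crOk G' k)
termination_by G _ => sizeOf G
decreasing_by
  rename_i hG'
  have := List.sizeOf_lt_of_mem hG'
  simp only [EGame.gray.sizeOf_spec]
  omega

/-- The boolean function `Cr` of Algorithm 3: for a gray node,
`Cr (gray opts) k = true` iff the node is terminal (`opts = []`), or every
option `G'` is a white node with Grundy value `≠ k` or a gray node with
`Cr G' k = false`. -/
def Cr : EGame → ℕ → Bool
  | .white _, _ => false
  | .gray opts, k => opts.isEmpty || opts.attach.all fun ⟨G', _⟩ => crOk G' k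

/-- The set of covered values of a game. -/
def covered (G : EGame) : Set ℕ := {k | Cr G k = true}

def FC (s : Set ℕ) : Prop := s.Finite ∨ sᶜ.Finite

lemma FC_compl {s : Set ℕ} (h : FC s) : FC sᶜ := by
  rcases h with h | h
  · exact Or.inr (by simpa using h)
  · exact Or.inl h

lemma FC_inter {s t : Set ℕ} (hs : FC s) (ht : FC t) : FC (s ∩ t) := by
  rcases hs with hs | hs
  · exact Or.inl (hs.inter_of_left t)
  · rcases ht with ht | ht
    · exact Or.inl (ht.inter_of_right s)
    · exact Or.inr (by rw [Set.compl_inter]; exact hs.union ht)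

lemma crOk_gray (opts : List EGame) (k : ℕ) :
    crOk (.gray opts) k = !(opts.isEmpty || opts.all fun G' => crOk G' k) := by
  rw [crOk]
  have h : (opts.attach.all fun x => crOk (↑x) k) = (opts.all fun G' => crOk G' k) := by
    rw [Bool.eq_iff_iff]
    simp only [List.all_eq_true, List.mem_attach, true_implies, Subtype.forall]
  simp [h]

lemma FC_all (l : List EGame) (h : ∀ G ∈ l, FC {k | crOk G k = true}) :
    FC {k | (l.all fun G' => crOk G' k) = true} := by
  induction l with
  | nil => exact Or.inr (by simp)
  | cons a l ih =>
      have : {k | ((a :: l).all fun G' => crOk G' k) = true}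
          = {k | crOk a k = true} ∩ {k | (l.all fun G' => crOk G' k) = true} := by
        ext k; simp [Set.mem_inter_iff]
      rw [this]
      exact FC_inter (h a (by simp)) (ih fun G hG => h G (by simp [hG]))

lemma FC_crOk : ∀ n (G : EGame), sizeOf G ≤ n → FC {k | crOk G k = true} := by
  intro n
  induction n with
  | zero => intro G hG; cases G <;> simp at hG
  | succ n ih =>
      intro G hG
      cases G with
      | white g =>
          refine Or.inr ?_
          have : {k | crOk (.white g) k = true}ᶜ ⊆ {g} := by
            intro k hk
            simp [crOk] at hk
            simp [hk]
          exact Set.Finite.subset (Set.finite_singleton g) this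
      | gray opts =>
          have hall : FC {k | (opts.all fun G' => crOk G' k) = true} := by
            refine FC_all opts fun G' hG' => ih G' ?_
            have := List.sizeOf_lt_of_mem hG'
            simp [EGame.gray.sizeOf_spec] at hG
            omega
          rcases eq_or_ne opts [] with rfl | hne
          · exact Or.inl (by simp [crOk_gray])
          · have : {k | crOk (.gray opts) k = true}
                = {k | (opts.all fun G' => crOk G' k) = true}ᶜ := by
              ext k
              simp [crOk_gray, List.isEmpty_iff, hne]
            rw [this]
            exact FC_compl hall

/-- Theorem 8 (part 1): for a gray node `G` whose options are previously
assigned, the covered-value set `C(G)` is either finite or of the form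
`ℤ≥0 \ F` for a finite set `F`. -/
theorem covered_finite_or_cofinite (opts : List EGame) :
    (covered (EGame.gray opts)).Finite ∨
      ∃ F : Set ℕ, F.Finite ∧ covered (EGame.gray opts) = Set.univ \ F := by
  have key : FC (covered (EGame.gray opts)) := by
    rcases eq_or_ne opts [] with rfl | hne
    · exact Or.inr (by simp [covered, Cr])
    · have hall : FC {k | (opts.all fun G' => crOk G' k) = true} :=
        FC_all opts fun G' _ => FC_crOk (sizeOf G') G' le_rfl
      have : covered (EGame.gray opts) = {k | (opts.all fun G' => crOk G' k) = true} := by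
        ext k
        simp [covered, Cr, List.isEmpty_iff, hne, List.all_eq_true]
      rw [this]; exact hall
  rcases key with h | h
  · exact Or.inl h
  · refine Or.inr ⟨(covered (EGame.gray opts))ᶜ, h, ?_⟩
    simp
end

section
/- Let G be a gray-node game whose options are previously assigned. If some gray option G' of G has an infinite (cofinite) covered-value set ℤ≥0 \ F', and l is the maximum of the union of the finite complements F₁,…,Fⱼ over all gray options with cofinite covered-value sets, then Cr(G,k) = false for all k > l. -/
/-- Theorem 8, first bullet: if some gray option of `G = gray opts` has a
cofinite covered-value set `ℤ≥0 \ F'`, and `l` bounds (as the maximum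
does) the union of the finite complements of the covered-value sets over
all such gray options, then `Cr(G, k) = false` for all `k > l`. -/
theorem Cr_false_of_gt (opts : List EGame) (l : ℕ)
    (hex : ∃ G' ∈ opts, (∃ o, G' = EGame.gray o) ∧ ((covered G')ᶜ).Finite)
    (hl : ∀ G' ∈ opts, (∃ o, G' = EGame.gray o) → ((covered G')ᶜ).Finite →
      ∀ k, Cr G' k = false → k ≤ l) :
    ∀ k, l < k → Cr (EGame.gray opts) k = false := by
  obtain ⟨G', hmem, ⟨o, rfl⟩, hfin⟩ := hex
  intro k hk
  have hCr : Cr (EGame.gray o) k = true := by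
    by_contra h
    have h' : Cr (EGame.gray o) k = false := by
      cases hc : Cr (EGame.gray o) k <;> simp_all
    exact absurd (hl _ hmem ⟨o, rfl⟩ hfin k h') (by omega)
  have hok : crOk (EGame.gray o) k = false := by
    rw [crOk]
    simp only [Cr] at hCr
    simp at hCr ⊢
    tauto
  simp only [Cr, Bool.or_eq_false_iff]
  refine ⟨by simp [List.isEmpty_iff, List.ne_nil_of_mem hmem], ?_⟩
  rw [Bool.eq_false_iff]
  intro hall
  rw [List.all_eq_true] at hall
  have := hall ⟨EGame.gray o, hmem⟩ (List.mem_attach _ _)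
  simp only at this
  rw [hok] at this
  exact Bool.false_ne_true this
end

section
/- Let G be a gray-node game whose options are previously assigned, such that every gray option of G has a finite covered-value set. Let l be the least nonnegative integer exceeding all integers in the union of the covered-value sets of gray options of G together with all Grundy values of white options of G. Then Cr(G,k) = true for all k ≥ l. -/
/-- Theorem 8, second bullet: if every gray option of `G = gray opts` has a
finite covered-value set, and `l` is a nonnegative integer exceeding all
integers in the union of the covered-value sets of the gray options together
with all Grundy values of the white options, then `Cr(G, k) = true` for all
`k ≥ l`. -/
theorem Cr_true_of_ge (opts : List EGame) (l : ℕ)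
    (hfin : ∀ G' ∈ opts, (∃ o, G' = EGame.gray o) → (covered G').Finite)
    (hl₁ : ∀ G' ∈ opts, (∃ o, G' = EGame.gray o) → ∀ k, Cr G' k = true → k < l)
    (hl₂ : ∀ g, EGame.white g ∈ opts → g < l) :
    ∀ k, l ≤ k → Cr (EGame.gray opts) k = true := by
  intro k hk
  rw [Cr]
  rw [Bool.or_eq_true]
  right
  rw [List.all_eq_true]
  rintro ⟨G', hG'⟩ -
  match G' with
  | .white g =>
      have := hl₂ g hG'
      show crOk (EGame.white g) k = true
      simp [crOk]
      omega
  | .gray o =>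
      have hlt := hl₁ _ hG' ⟨o, rfl⟩ k
      have : crOk (EGame.gray o) k = !(Cr (EGame.gray o) k) := by
        rw [crOk, Cr]
      show crOk (EGame.gray o) k = true
      rw [this]
      rcases h : Cr (EGame.gray o) k with _ | _
      · simp
      · exact absurd (hlt h) (by omega)
end

section
/- For cyclic impartial games (finite digraph possibly with cycles, no entailing moves): if G has Grundy value m < ∞ and H has Grundy value ∞_D (H lies in a cyclic zone with exit values D), then the disjunctive sum G + H has Grundy value ∞_{m ⊕ D}; consequently G + H is an N-position if and only if m ∈ D. -/
/-- The minimum excluded value of a set of nonnegative integers. -/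
noncomputable def mex (S : Set ℕ) : ℕ := sInf {n | n ∉ S}

/-- A cyclic impartial game board: a finite digraph, possibly with cycles.
`adj x y` means `(V, y)` is an option of `(V, x)`. -/
structure CycGame where
  V : Type
  finite : Finite V
  adj : V → V → Prop

namespace CycGame

open Classical in
/-- One step of the Smith–Fraenkel–Perl labeling algorithm (Algorithm 2):
an unassigned node `x` receives the value `m = mex` of the assigned values
of its options, provided every option that is unassigned or assigned a
value greater than `m` reverts, i.e. has an option assigned `m`.  Here
`none` plays the role of the symbol `∞`. -/
noncomputable def step (G : CycGame) (g : G.V → Option ℕ) : G.V → Option ℕ :=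
  fun x =>
    match g x with
    | some m => some m
    | none =>
      let m := mex {k | ∃ y, G.adj x y ∧ g y = some k}
      if ∀ y, G.adj x y → (∀ k, g y = some k → m < k) →
          ∃ z, G.adj y z ∧ g z = some m then
        some m
      else none

/-- The Smith–Fraenkel–Perl Grundy labeling: iterate the algorithm (from the
all-`∞` initialization) until it stabilizes; `Nat.card G.V + 1` steps
suffice.  `smith G x = some m` means `(V, x)` has finite Grundy value `m`;
`smith G x = none` means `x` lies in a cyclic zone (value `∞_D`). -/
noncomputable def smith (G : CycGame) : G.V → Option ℕ :=
  (G.step)^[Nat.card G.V + 1] fun _ => none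

/-- The exit set `D` of a node: the finite Grundy values of its options.
For a node in a cyclic zone this is the subscript in `∞_D`. -/
def exits (G : CycGame) (x : G.V) : Set ℕ :=
  {a | ∃ y, G.adj x y ∧ G.smith y = some a}

/-- `x` is an N-position: the next player can force a win, i.e. there is a
move to a position all of whose options are N-positions (a P-position). -/
inductive NPos (G : CycGame) : G.V → Prop where
  | intro (x y : G.V) (h : G.adj x y) (hy : ∀ z, G.adj y z → NPos G z) :
      NPos G x

/-- `x` is a P-position: it is terminal or all of its options are
N-positions. -/
def PPos (G : CycGame) (x : G.V) : Prop := ∀ y, G.adj x y → G.NPos y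

/-- `x` is a Draw: neither player can force a win (the game is tied by
infinite play). -/
def Draw (G : CycGame) (x : G.V) : Prop := ¬ G.NPos x ∧ ¬ G.PPos x

/-- The disjunctive sum of two cyclic impartial games: a move is a move in
exactly one component. -/
def sum (G H : CycGame) : CycGame where
  V := G.V × H.V
  finite := by have := G.finite; have := H.finite; exact inferInstance
  adj := fun p q =>
    (G.adj p.1 q.1 ∧ p.2 = q.2) ∨ (H.adj p.2 q.2 ∧ p.1 = q.1)

end CycGame

namespace CycGame


lemma mem_of_lt_mex {S : Set ℕ} {k : ℕ} (h : k < mex S) : k ∈ S := by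
  by_contra hk
  unfold mex at h
  exact absurd (Nat.sInf_le (show k ∈ {n | n ∉ S} from hk)) (by omega)

lemma mex_le {S : Set ℕ} {k : ℕ} (h : k ∉ S) : mex S ≤ k := Nat.sInf_le h

lemma mex_notMem {S : Set ℕ} (hS : S.Finite) : mex S ∉ S :=
  Nat.sInf_mem (hS.infinite_compl.nonempty)

def exitsOf (G : CycGame) (γ : G.V → Option ℕ) (x : G.V) : Set ℕ :=
  {k | ∃ y, G.adj x y ∧ γ y = some k}

lemma exitsOf_finite (G : CycGame) (γ : G.V → Option ℕ) (x : G.V) :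
    (exitsOf G γ x).Finite := by
  have : Finite G.V := G.finite
  refine (Set.finite_range (fun y => (γ y).getD 0)).subset ?_
  rintro a ⟨y, -, hy⟩
  exact ⟨y, by simp [hy]⟩

lemma exits_eq (G : CycGame) (x : G.V) : G.exits x = exitsOf G G.smith x := rfl

structure Spec (G : CycGame) (γ : G.V → Option ℕ) (s : G.V → ℕ) : Prop where
  c0 : ∀ ⦃x m⦄, γ x = some m → ∀ ⦃y⦄, G.adj x y → γ y ≠ some m
  c1 : ∀ ⦃x m⦄, γ x = some m → ∀ k, k < m → ∃ y, G.adj x y ∧ γ y = some k ∧ s y < s x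
  c2 : ∀ ⦃x m⦄, γ x = some m → ∀ ⦃y⦄, G.adj x y → (∀ k, γ y = some k → m < k) →
      ∃ z, G.adj y z ∧ γ z = some m ∧ s z < s x
  c3 : ∀ ⦃x⦄, γ x = none →
      ∃ y, G.adj x y ∧ (∀ k, γ y = some k → mex (exitsOf G γ x) < k) ∧
        ∀ z, G.adj y z → γ z ≠ some (mex (exitsOf G γ x))

/-- the witness in `c3` is itself unassigned -/
lemma Spec.c3' {G : CycGame} {γ s} (h : Spec G γ s) {x} (hx : γ x = none) :
    ∃ y, G.adj x y ∧ γ y = none ∧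
      ∀ z, G.adj y z → γ z ≠ some (mex (exitsOf G γ x)) := by
  obtain ⟨y, hxy, hk, hz⟩ := h.c3 hx
  refine ⟨y, hxy, ?_, hz⟩
  cases hy : γ y with
  | none => rfl
  | some k =>
    exfalso
    obtain ⟨z, hyz, hzv, -⟩ := h.c1 hy _ (hk k hy)
    exact hz z hyz hzv

/-- One direction of uniqueness of labelings satisfying the spec. -/
theorem Spec.dir {G : CycGame} {γ s γ' s'} (h : Spec G γ s) (h' : Spec G γ' s') :
    ∀ m x, γ x = some m → γ' x = some m := by
  intro m
  induction m using Nat.strong_induction_on with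
  | _ m IHm =>
  suffices H : ∀ n x, s x = n → γ x = some m → γ' x = some m by
    intro x hx; exact H (s x) x rfl hx
  intro n
  induction n using Nat.strong_induction_on with
  | _ n IHs =>
  intro x hsx hx
  subst hsx
  -- Step A : no option of x gets γ'-value m
  have hA : ∀ w, G.adj x w → γ' w ≠ some m := by
    intro w hw hw'
    have hcond : (∀ k, γ w = some k → m < k) ∨ (∃ k, k < m ∧ γ w = some k) := by
      cases hγw : γ w with
      | none => exact Or.inl (by simp)
      | some k =>
        rcases lt_trichotomy k m with hk | hk | hk
        · exact Or.inr ⟨k, hk, rfl⟩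
        · exact absurd (hk ▸ hγw) (h.c0 hx hw)
        · refine Or.inl ?_
          intro k' hk'; injection hk' with e; omega
    rcases hcond with hc | ⟨k, hk, hγw⟩
    · obtain ⟨v, hwv, hv, hsv⟩ := h.c2 hx hw hc
      exact h'.c0 hw' hwv (IHs (s v) hsv v rfl hv)
    · have := IHm k hk w hγw
      rw [hw'] at this; injection this with e; omega
  have hB : ∀ k, k < m → k ∈ exitsOf G γ' x := by
    intro k hk
    obtain ⟨w, hw, hwv, -⟩ := h.c1 hx k hk
    exact ⟨w, hw, IHm k hk w hwv⟩
  cases hx' : γ' x with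
  | none =>
    exfalso
    have hmeq : mex (exitsOf G γ' x) = m := by
      have h1 : mex (exitsOf G γ' x) ≤ m := by
        refine mex_le (fun hm => ?_)
        obtain ⟨w, hw, hwv⟩ := hm
        exact hA w hw hwv
      have h2 : ¬ mex (exitsOf G γ' x) < m := fun hlt =>
        mex_notMem (exitsOf_finite G γ' x) (hB _ hlt)
      omega
    obtain ⟨z, hxz, hcond, hnz⟩ := h'.c3 hx'
    rw [hmeq] at hcond hnz
    cases hγz : γ z with
    | some k =>
      rcases lt_trichotomy k m with hk | hk | hk
      · have := hcond k (IHm k hk z hγz)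
        omega
      · exact h.c0 hx hxz (hk ▸ hγz)
      · obtain ⟨v, hzv, hv, hsv⟩ := h.c2 hx hxz
          (by intro k' h''; rw [hγz] at h''; injection h'' with e; omega)
        exact hnz v hzv (IHs (s v) hsv v rfl hv)
    | none =>
      obtain ⟨v, hzv, hv, hsv⟩ := h.c2 hx hxz (by simp [hγz])
      exact hnz v hzv (IHs (s v) hsv v rfl hv)
  | some m'' =>
    rcases lt_trichotomy m'' m with hlt | heq | hgt
    · exfalso
      obtain ⟨w, hw, hwv⟩ := hB m'' hlt
      exact h'.c0 hx' hw hwv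
    · rw [heq]
    · exfalso
      obtain ⟨w, hw, hwv, -⟩ := h'.c1 hx' m hgt
      exact hA w hw hwv

theorem Spec.eq {G : CycGame} {γ s γ' s'} (h : Spec G γ s) (h' : Spec G γ' s') :
    γ = γ' := by
  funext x
  cases hx : γ x with
  | some m => exact (h.dir h' m x hx).symm
  | none =>
    cases hx' : γ' x with
    | none => rfl
    | some m => exact absurd (h'.dir h m x hx') (by simp [hx])

theorem Spec.outcome {G : CycGame} {γ s} (h : Spec G γ s) :
    ∀ x m, γ x = some m → (m = 0 → G.PPos x) ∧ (m ≠ 0 → G.NPos x) := by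
  suffices H : ∀ n x m, s x = n → γ x = some m → (m = 0 → G.PPos x) ∧ (m ≠ 0 → G.NPos x) by
    intro x m hx; exact H (s x) x m rfl hx
  intro n
  induction n using Nat.strong_induction_on with
  | _ n IH =>
  intro x m hsx hx
  subst hsx
  constructor
  · rintro rfl
    intro z hz
    have hcond : ∀ k, γ z = some k → 0 < k := by
      intro k hk
      have hne := h.c0 hx hz
      rw [hk] at hne
      rcases Nat.eq_zero_or_pos k with rfl | hp
      · exact absurd rfl hne
      · exact hp
    obtain ⟨v, hzv, hv, hsv⟩ := h.c2 hx hz hcond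
    exact NPos.intro z v hzv ((IH (s v) hsv v 0 rfl hv).1 rfl)
  · intro hm
    obtain ⟨w, hw, hw0, hsw⟩ := h.c1 hx 0 (by omega)
    exact NPos.intro x w hw ((IH (s w) hsw w 0 rfl hw0).1 rfl)

theorem Spec.npos_char {G : CycGame} {γ s} (h : Spec G γ s) {x} (hx : G.NPos x) :
    (∃ m, m ≠ 0 ∧ γ x = some m) ∨ (γ x = none ∧ 0 ∈ exitsOf G γ x) := by
  induction hx with
  | intro x y hxy hy IH =>
  cases hγy : γ y with
  | some k =>
    rcases Nat.eq_zero_or_pos k with rfl | hkpos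
    · cases hγx : γ x with
      | some m =>
        refine Or.inl ⟨m, ?_, rfl⟩
        rintro rfl
        exact h.c0 hγx hxy hγy
      | none => exact Or.inr ⟨rfl, ⟨y, hxy, hγy⟩⟩
    · exfalso
      obtain ⟨z, hyz, hz0, -⟩ := h.c1 hγy 0 hkpos
      rcases IH z hyz with ⟨m', hm', hm'e⟩ | ⟨hn, -⟩
      · rw [hz0] at hm'e; injection hm'e with e; omega
      · rw [hz0] at hn; exact nomatch hn
  | none =>
    exfalso
    have h0 : (0:ℕ) ∉ exitsOf G γ y := by
      rintro ⟨w, hyw, hw⟩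
      rcases IH w hyw with ⟨m', hm', hm'e⟩ | ⟨hn, -⟩
      · rw [hw] at hm'e; injection hm'e with e; omega
      · rw [hw] at hn; exact nomatch hn
    have hmex : mex (exitsOf G γ y) = 0 := Nat.le_zero.mp (mex_le h0)
    obtain ⟨z, hyz, hcond, hnz⟩ := h.c3 hγy
    rw [hmex] at hcond hnz
    cases hγz : γ z with
    | some k =>
      have hk : 0 < k := hcond k hγz
      obtain ⟨v, hzv, hv0, -⟩ := h.c1 hγz 0 hk
      exact hnz v hzv hv0
    | none =>
      rcases IH z hyz with ⟨m', hm', hm'e⟩ | ⟨-, ⟨v, hzv, hv0⟩⟩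
      · rw [hγz] at hm'e; exact nomatch hm'e
      · exact hnz v hzv hv0

theorem Spec.npos_of_zero_exit {G : CycGame} {γ s} (h : Spec G γ s) {x}
    (hx : 0 ∈ exitsOf G γ x) : G.NPos x := by
  obtain ⟨w, hw, hw0⟩ := hx
  exact NPos.intro x w hw ((h.outcome w 0 hw0).1 rfl)

noncomputable def iter (G : CycGame) (i : ℕ) : G.V → Option ℕ :=
  (G.step)^[i] fun _ => none

lemma iter_zero (G : CycGame) : G.iter 0 = fun _ => none := rfl

lemma iter_succ (G : CycGame) (i : ℕ) : G.iter (i + 1) = G.step (G.iter i) :=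
  Function.iterate_succ_apply' _ _ _

lemma smith_eq_iter (G : CycGame) : G.smith = G.iter (Nat.card G.V + 1) := rfl

lemma step_some (G : CycGame) (g : G.V → Option ℕ) {x m} (hx : g x = some m) :
    G.step g x = some m := by
  simp only [step, hx]

lemma iter_mono (G : CycGame) {i j : ℕ} (hij : i ≤ j) {x m}
    (h : G.iter i x = some m) : G.iter j x = some m := by
  induction j, hij using Nat.le_induction with
  | base => exact h
  | succ j hij IH => rw [iter_succ]; exact G.step_some _ IH

/-- extraction of the facts holding at assignment time -/
lemma iter_assign (G : CycGame) {i : ℕ} {x m} (h0 : G.iter i x = none)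
    (h1 : G.iter (i + 1) x = some m) :
    m = mex (exitsOf G (G.iter i) x) ∧
      ∀ y, G.adj x y → (∀ k, G.iter i y = some k → m < k) →
        ∃ z, G.adj y z ∧ G.iter i z = some m := by
  rw [iter_succ] at h1
  simp only [step, h0] at h1
  split at h1
  · next hcond2 =>
    injection h1 with h1
    subst h1
    exact ⟨rfl, hcond2⟩
  · exact nomatch h1

lemma iter_stab (G : CycGame) {i : ℕ} (h : G.iter (i + 1) = G.iter i) :
    ∀ j, i ≤ j → G.iter j = G.iter i := by
  intro j hij
  induction j, hij using Nat.le_induction with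
  | base => rfl
  | succ j hij IH => rw [iter_succ, IH, ← iter_succ, h]

lemma exists_fix (G : CycGame) : ∃ i ≤ Nat.card G.V, G.iter (i + 1) = G.iter i := by
  have : Finite G.V := G.finite
  by_contra hcon
  push_neg at hcon
  have hstrict : ∀ i ≤ Nat.card G.V,
      {x | (G.iter i x).isSome} ⊂ {x | (G.iter (i+1) x).isSome} := by
    intro i hi
    constructor
    · intro x hx
      simp only [Set.mem_setOf_eq, Option.isSome_iff_exists] at hx ⊢
      obtain ⟨m, hm⟩ := hx
      exact ⟨m, G.iter_mono (Nat.le_succ i) hm⟩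
    · intro hsub
      apply hcon i hi
      funext x
      cases hx : G.iter i x with
      | some m => exact G.iter_mono (Nat.le_succ i) hx
      | none =>
        cases hx' : G.iter (i+1) x with
        | none => rfl
        | some m =>
          exfalso
          have := hsub (show x ∈ {x | (G.iter (i+1) x).isSome} by simp [hx'])
          simp [hx] at this
  have hcard : ∀ i, i ≤ Nat.card G.V + 1 → i ≤ {x | (G.iter i x).isSome}.ncard := by
    intro i
    induction i with
    | zero => intro _; omega
    | succ i IH =>
      intro hi
      have h1 : i ≤ {x | (G.iter i x).isSome}.ncard := IH (by omega)
      have h2 : {x | (G.iter i x).isSome}.ncard < {x | (G.iter (i+1) x).isSome}.ncard :=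
        Set.ncard_lt_ncard (hstrict i (by omega)) (Set.toFinite _)
      omega
  have h1 := hcard (Nat.card G.V + 1) le_rfl
  have h2 : {x | (G.iter (Nat.card G.V + 1) x).isSome}.ncard ≤ Nat.card G.V := by
    rw [← Set.ncard_univ]
    exact Set.ncard_le_ncard (Set.subset_univ _) (Set.toFinite _)
  omega

lemma smith_fix (G : CycGame) : G.step G.smith = G.smith := by
  obtain ⟨i, hi, hfix⟩ := G.exists_fix
  have h1 : G.iter (Nat.card G.V + 1) = G.iter i := G.iter_stab hfix _ (by omega)
  have h2 : G.iter (Nat.card G.V + 2) = G.iter i := G.iter_stab hfix _ (by omega)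
  rw [smith_eq_iter, ← iter_succ]
  show G.iter (Nat.card G.V + 2) = _
  rw [h1, h2]

noncomputable def stg (G : CycGame) (x : G.V) : ℕ :=
  sInf {i | G.iter i x = G.smith x}

lemma stg_le (G : CycGame) (x : G.V) : G.stg x ≤ Nat.card G.V + 1 :=
  Nat.sInf_le (by rw [Set.mem_setOf_eq, ← smith_eq_iter])

lemma iter_stg (G : CycGame) (x : G.V) : G.iter (G.stg x) x = G.smith x :=
  Nat.sInf_mem (⟨Nat.card G.V + 1, by rw [Set.mem_setOf_eq, ← smith_eq_iter]⟩ :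
    {i | G.iter i x = G.smith x}.Nonempty)

lemma stg_spec (G : CycGame) {x m} (hx : G.smith x = some m) :
    1 ≤ G.stg x ∧ G.iter (G.stg x - 1) x = none ∧ G.iter (G.stg x) x = some m := by
  have h1 := G.iter_stg x
  rw [hx] at h1
  have hpos : 1 ≤ G.stg x := by
    rcases Nat.eq_zero_or_pos (G.stg x) with h0 | h
    · rw [h0] at h1; simp [iter_zero] at h1
    · exact h
  refine ⟨hpos, ?_, h1⟩
  cases hprev : G.iter (G.stg x - 1) x with
  | none => rfl
  | some k =>
    exfalso
    have hk : G.smith x = some k := by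
      rw [smith_eq_iter]
      exact G.iter_mono (by have := G.stg_le x; omega) hprev
    have : G.stg x ≤ G.stg x - 1 := Nat.sInf_le (by rw [Set.mem_setOf_eq, hprev, hx, ← hk, hx])
    omega

lemma smith_of_iter (G : CycGame) {x m i} (hi : i ≤ Nat.card G.V + 1)
    (hx : G.iter i x = some m) : G.smith x = some m ∧ G.stg x ≤ i := by
  have hs : G.smith x = some m := by
    rw [smith_eq_iter]; exact G.iter_mono hi hx
  exact ⟨hs, Nat.sInf_le (by rw [Set.mem_setOf_eq, hx, hs])⟩

theorem smith_spec (G : CycGame) : Spec G G.smith G.stg := by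
  have hfin : ∀ x, (exitsOf G (G.iter x) : G.V → Set ℕ) = (exitsOf G (G.iter x)) := fun _ => rfl
  constructor
  -- c0
  · intro x m hx y hxy hy
    obtain ⟨hpos, hnone, hsome⟩ := G.stg_spec hx
    set i := G.stg x with hidef
    obtain ⟨hmex, hrev⟩ := G.iter_assign (i := i - 1) (x := x) (m := m) hnone
      (by rw [Nat.sub_add_cancel hpos]; exact hsome)
    cases hiy : G.iter (i-1) y with
    | some k =>
      have hk : G.smith y = some k := by
        rw [smith_eq_iter]
        exact G.iter_mono (by have := G.stg_le x; omega) hiy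
      rw [hy] at hk; injection hk with hk
      subst hk
      have : m ∈ exitsOf G (G.iter (i-1)) x := ⟨y, hxy, hiy⟩
      rw [hmex] at this
      exact mex_notMem (exitsOf_finite _ _ _) this
    | none =>
      obtain ⟨z, hyz, hz⟩ := hrev y hxy (by intro k hk; rw [hiy] at hk; exact nomatch hk)
      -- y is assigned later, at its own assignment m is among the options' values
      obtain ⟨hpy, hny, hsy⟩ := G.stg_spec hy
      set j := G.stg y with hjdef
      have hij : i ≤ j := by
        by_contra hcon
        push_neg at hcon
        have : G.iter (i-1) y = some m := G.iter_mono (by omega) hsy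
        rw [hiy] at this; exact nomatch this
      obtain ⟨hmexy, -⟩ := G.iter_assign (i := j - 1) (x := y) (m := m) hny
        (by rw [Nat.sub_add_cancel hpy]; exact hsy)
      have : m ∈ exitsOf G (G.iter (j-1)) y := ⟨z, hyz, G.iter_mono (by omega) hz⟩
      rw [hmexy] at this
      exact mex_notMem (exitsOf_finite _ _ _) this
  -- c1
  · intro x m hx k hk
    obtain ⟨hpos, hnone, hsome⟩ := G.stg_spec hx
    set i := G.stg x with hidef
    obtain ⟨hmex, hrev⟩ := G.iter_assign (i := i - 1) (x := x) (m := m) hnone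
      (by rw [Nat.sub_add_cancel hpos]; exact hsome)
    rw [hmex] at hk
    obtain ⟨y, hxy, hy⟩ := mem_of_lt_mex hk
    obtain ⟨hys, hyle⟩ := G.smith_of_iter (by have := G.stg_le x; omega) hy
    exact ⟨y, hxy, hys, by omega⟩
  -- c2
  · intro x m hx y hxy hcond
    obtain ⟨hpos, hnone, hsome⟩ := G.stg_spec hx
    set i := G.stg x with hidef
    obtain ⟨hmex, hrev⟩ := G.iter_assign (i := i - 1) (x := x) (m := m) hnone
      (by rw [Nat.sub_add_cancel hpos]; exact hsome)
    obtain ⟨z, hyz, hz⟩ := hrev y hxy (by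
      intro k hk
      have := (G.smith_of_iter (by have := G.stg_le x; omega) hk).1
      exact hcond k this)
    obtain ⟨hzs, hzle⟩ := G.smith_of_iter (by have := G.stg_le x; omega) hz
    exact ⟨z, hyz, hzs, by omega⟩
  -- c3
  · intro x hx
    have hfp := congrFun G.smith_fix x
    simp only [step, hx] at hfp
    split at hfp
    · exact nomatch hfp
    · next hcon =>
      push_neg at hcon
      obtain ⟨y, hxy, hcond, hrev⟩ := hcon
      refine ⟨y, hxy, hcond, ?_⟩
      intro z hyz hz
      exact hrev z hyz hz

noncomputable def sumFn (G H : CycGame) (γG : G.V → Option ℕ) (γH : H.V → Option ℕ) :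
    G.V × H.V → Option ℕ := fun p =>
  match γG p.1, γH p.2 with
  | some a, some b => some (a ^^^ b)
  | _, _ => none

noncomputable def sumStg (G H : CycGame) (γG : G.V → Option ℕ)
    (sG : G.V → ℕ) (sH : H.V → ℕ) : G.V × H.V → ℕ := fun p =>
  (γG p.1).getD 0 * (Nat.card G.V + Nat.card H.V + 3) + sG p.1 + sH p.2

section SumLemmas

variable {G H : CycGame} {γG : G.V → Option ℕ} {γH : H.V → Option ℕ}

lemma sum_adj {p q : G.V × H.V} :
    (G.sum H).adj p q ↔ (G.adj p.1 q.1 ∧ p.2 = q.2) ∨ (H.adj p.2 q.2 ∧ p.1 = q.1) :=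
  Iff.rfl

lemma sumFn_some {a b x y} (ha : γG x = some a) (hb : γH y = some b) :
    sumFn G H γG γH (x, y) = some (a ^^^ b) := by
  simp [sumFn, ha, hb]

lemma sumFn_none_left {x y} (ha : γG x = none) : sumFn G H γG γH (x, y) = none := by
  cases hb : γH y <;> simp [sumFn, ha, hb]

lemma sumFn_none_right {x y} (hb : γH y = none) : sumFn G H γG γH (x, y) = none := by
  cases ha : γG x <;> simp [sumFn, ha, hb]

lemma sumFn_eq_some {p c} (h : sumFn G H γG γH p = some c) :
    ∃ a b, γG p.1 = some a ∧ γH p.2 = some b ∧ c = a ^^^ b := by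
  cases ha : γG p.1 with
  | none => rw [show p = (p.1, p.2) from rfl, sumFn_none_left ha] at h; exact nomatch h
  | some a =>
    cases hb : γH p.2 with
    | none => rw [show p = (p.1, p.2) from rfl, sumFn_none_right hb] at h; exact nomatch h
    | some b =>
      refine ⟨a, b, rfl, rfl, ?_⟩
      rw [show p = (p.1, p.2) from rfl, sumFn_some ha hb] at h
      injection h with h
      omega

lemma xor_solve_left {a b c : ℕ} (h : c = a ^^^ b) : a = c ^^^ b := by
  rw [h, Nat.xor_xor_cancel_right]

lemma xor_solve_right {a b c : ℕ} (h : c = a ^^^ b) : b = a ^^^ c := by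
  rw [h, Nat.xor_xor_cancel_left]

lemma stage_lt {a' a s1 s2 t1 t2 K : ℕ} (h : a' < a) (hs : s1 + t1 < K) :
    a' * K + s1 + t1 < a * K + s2 + t2 := by
  have h2 : (a' + 1) * K ≤ a * K := Nat.mul_le_mul_right K (by omega)
  have h3 : (a' + 1) * K = a' * K + K := by ring
  omega

lemma sum_exits_left {x y a} (ha : γG x = some a) (hb : γH y = none) :
    exitsOf (G.sum H) (sumFn G H γG γH) (x, y) = (fun d => a ^^^ d) '' exitsOf H γH y := by
  ext c
  constructor
  · rintro ⟨⟨q1, q2⟩, hadj, hval⟩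
    rcases sum_adj.mp hadj with ⟨h1, h2⟩ | ⟨h1, h2⟩
    · exfalso
      simp only at h1 h2
      rw [sumFn_none_right (by rw [← h2]; exact hb)] at hval
      exact nomatch hval
    · simp only at h1 h2
      obtain ⟨a', b', ha', hb', he⟩ := sumFn_eq_some hval
      simp only at ha' hb'
      rw [← h2] at ha'
      rw [ha] at ha'; injection ha' with ha'
      refine ⟨b', ⟨q2, h1, hb'⟩, ?_⟩
      simp [he, ha']
  · rintro ⟨d, ⟨y', hyy', hy'⟩, rfl⟩
    exact ⟨(x, y'), Or.inr ⟨hyy', rfl⟩, sumFn_some ha hy'⟩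

lemma sum_exits_right {x y b} (ha : γG x = none) (hb : γH y = some b) :
    exitsOf (G.sum H) (sumFn G H γG γH) (x, y) = (fun d => d ^^^ b) '' exitsOf G γG x := by
  ext c
  constructor
  · rintro ⟨⟨q1, q2⟩, hadj, hval⟩
    rcases sum_adj.mp hadj with ⟨h1, h2⟩ | ⟨h1, h2⟩
    · simp only at h1 h2
      obtain ⟨a', b', ha', hb', he⟩ := sumFn_eq_some hval
      simp only at ha' hb'
      rw [← h2] at hb'
      rw [hb] at hb'; injection hb' with hb'
      refine ⟨a', ⟨q1, h1, ha'⟩, ?_⟩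
      simp [he, hb']
    · exfalso
      simp only at h1 h2
      rw [sumFn_none_left (by rw [← h2]; exact ha)] at hval
      exact nomatch hval
  · rintro ⟨d, ⟨x', hxx', hx'⟩, rfl⟩
    exact ⟨(x', y), Or.inl ⟨hxx', rfl⟩, sumFn_some hx' hb⟩

theorem sum_spec {sG sH} (hG : Spec G γG sG) (hH : Spec H γH sH)
    (hbG : ∀ x, sG x ≤ Nat.card G.V + 1) (hbH : ∀ y, sH y ≤ Nat.card H.V + 1) :
    Spec (G.sum H) (sumFn G H γG γH) (sumStg G H γG sG sH) := by
  set K := Nat.card G.V + Nat.card H.V + 3 with hK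
  have hKb : ∀ (x : G.V) (y : H.V), sG x + sH y < K := by
    intro x y; have := hbG x; have := hbH y; omega
  have hstg : ∀ (x : G.V) (y : H.V) (a : ℕ), γG x = some a →
      sumStg G H γG sG sH (x, y) = a * K + sG x + sH y := by
    intro x y a ha; simp [sumStg, ha, hK]
  constructor
  -- c0
  · rintro ⟨p1, p2⟩ m hp ⟨q1, q2⟩ hpq hq
    obtain ⟨a, b, ha, hb, rfl⟩ := sumFn_eq_some hp
    obtain ⟨a', b', ha', hb', he⟩ := sumFn_eq_some hq
    rcases sum_adj.mp hpq with ⟨h1, h2⟩ | ⟨h1, h2⟩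
    · simp only at h1 h2 ha' hb'
      rw [← h2, hb] at hb'
      injection hb' with hb'
      subst hb'
      have : a' = a := by
        have := he
        rwa [Nat.xor_left_inj, eq_comm] at this
      subst this
      exact hG.c0 ha h1 ha'
    · simp only at h1 h2 ha' hb'
      rw [← h2, ha] at ha'
      injection ha' with ha'
      subst ha'
      have : b' = b := by rwa [Nat.xor_right_inj, eq_comm] at he
      subst this
      exact hH.c0 hb h1 hb'
  -- c1
  · rintro ⟨p1, p2⟩ m hp k hk
    obtain ⟨a, b, ha, hb, rfl⟩ := sumFn_eq_some hp
    simp only at ha hb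
    rcases Nat.lt_xor_cases hk with hcase | hcase
    · obtain ⟨x', hx'a, hx'v, hx's⟩ := hG.c1 ha (k ^^^ b) hcase
      refine ⟨(x', p2), Or.inl ⟨hx'a, rfl⟩, ?_, ?_⟩
      · rw [sumFn_some hx'v hb, Nat.xor_xor_cancel_right]
      · rw [hstg _ _ _ hx'v, hstg _ _ _ ha]
        exact stage_lt hcase (hKb _ _)
    · obtain ⟨y', hy'a, hy'v, hy's⟩ := hH.c1 hb (k ^^^ a) hcase
      refine ⟨(p1, y'), Or.inr ⟨hy'a, rfl⟩, ?_, ?_⟩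
      · rw [sumFn_some ha hy'v, Nat.xor_comm k a, Nat.xor_xor_cancel_left]
      · rw [hstg _ _ _ ha, hstg _ _ _ ha]
        omega
  -- c2
  · rintro ⟨p1, p2⟩ m hp ⟨q1, q2⟩ hpq hcond
    obtain ⟨a, b, ha, hb, rfl⟩ := sumFn_eq_some hp
    simp only at ha hb
    rcases sum_adj.mp hpq with ⟨h1, h2⟩ | ⟨h1, h2⟩
    · -- move in G
      simp only at h1 h2
      subst h2
      cases hq1 : γG q1 with
      | none =>
        obtain ⟨w, hwa, hwv, hws⟩ := hG.c2 ha h1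
          (by intro k hk; rw [hq1] at hk; exact nomatch hk)
        refine ⟨(w, p2), Or.inl ⟨hwa, rfl⟩, sumFn_some hwv hb, ?_⟩
        rw [hstg _ _ _ hwv, hstg _ _ _ ha]
        omega
      | some a' =>
        have hlt : a ^^^ b < a' ^^^ b := hcond _ (sumFn_some hq1 hb)
        by_cases hc : a < a'
        · obtain ⟨w, hwa, hwv, hws⟩ := hG.c2 ha h1
            (by intro k hk; rw [hq1] at hk; injection hk with hk; omega)
          refine ⟨(w, p2), Or.inl ⟨hwa, rfl⟩, sumFn_some hwv hb, ?_⟩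
          rw [hstg _ _ _ hwv, hstg _ _ _ ha]
          omega
        · have hfirst : (a ^^^ b) ^^^ b < a' ∨ (a ^^^ b) ^^^ a' < b := Nat.lt_xor_cases hlt
          rw [Nat.xor_xor_cancel_right] at hfirst
          have hsnd : (a ^^^ b) ^^^ a' < b := by tauto
          obtain ⟨v, hva, hvv, hvs⟩ := hH.c1 hb _ hsnd
          have hane : a' < a := by
            rcases lt_trichotomy a' a with h | h | h
            · exact h
            · exfalso; subst h; omega
            · exact absurd h hc
          refine ⟨(q1, v), Or.inr ⟨hva, rfl⟩, ?_, ?_⟩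
          · rw [sumFn_some hq1 hvv]
            congr 1
            rw [Nat.xor_comm (a ^^^ b) a', Nat.xor_xor_cancel_left]
          · rw [hstg _ _ _ hq1, hstg _ _ _ ha]
            exact stage_lt hane (hKb _ _)
    · -- move in H
      simp only at h1 h2
      subst h2
      cases hq2 : γH q2 with
      | none =>
        obtain ⟨w, hwa, hwv, hws⟩ := hH.c2 hb h1
          (by intro k hk; rw [hq2] at hk; exact nomatch hk)
        refine ⟨(p1, w), Or.inr ⟨hwa, rfl⟩, sumFn_some ha hwv, ?_⟩
        rw [hstg _ _ _ ha, hstg _ _ _ ha]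
        omega
      | some b' =>
        have hlt : a ^^^ b < a ^^^ b' := hcond _ (sumFn_some ha hq2)
        by_cases hc : b < b'
        · obtain ⟨w, hwa, hwv, hws⟩ := hH.c2 hb h1
            (by intro k hk; rw [hq2] at hk; injection hk with hk; omega)
          refine ⟨(p1, w), Or.inr ⟨hwa, rfl⟩, sumFn_some ha hwv, ?_⟩
          rw [hstg _ _ _ ha, hstg _ _ _ ha]
          omega
        · have hfirst : (a ^^^ b) ^^^ b' < a ∨ (a ^^^ b) ^^^ a < b' := Nat.lt_xor_cases hlt
          have : (a ^^^ b) ^^^ a = b := by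
            rw [Nat.xor_comm a b, Nat.xor_xor_cancel_right]
          rw [this] at hfirst
          have hsnd : (a ^^^ b) ^^^ b' < a := by tauto
          obtain ⟨u, hua, huv, hus⟩ := hG.c1 ha _ hsnd
          refine ⟨(u, q2), Or.inl ⟨hua, rfl⟩, ?_, ?_⟩
          · rw [sumFn_some huv hq2, Nat.xor_xor_cancel_right]
          · rw [hstg _ _ _ huv, hstg _ _ _ ha]
            exact stage_lt hsnd (hKb _ _)
  -- c3
  · rintro ⟨p1, p2⟩ hp
    set μ := mex (exitsOf (G.sum H) (sumFn G H γG γH) (p1, p2)) with hμ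
    cases hg : γG p1 with
    | none =>
      cases hh : γH p2 with
      | none =>
        -- both cyclic
        obtain ⟨x₀, hx₀a, hx₀n, -⟩ := hG.c3' hg
        refine ⟨(x₀, p2), Or.inl ⟨hx₀a, rfl⟩, ?_, ?_⟩
        · intro k hk
          rw [sumFn_none_left hx₀n] at hk
          exact nomatch hk
        · rintro ⟨r1, r2⟩ hr hrv
          rcases sum_adj.mp hr with ⟨h1, h2⟩ | ⟨h1, h2⟩
          · simp only at h1 h2
            rw [sumFn_none_right (by rw [← h2]; exact hh)] at hrv
            exact nomatch hrv
          · simp only at h1 h2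
            rw [sumFn_none_left (by rw [← h2]; exact hx₀n)] at hrv
            exact nomatch hrv
      | some b =>
        -- x cyclic, y assigned : mirror case
        have hE : exitsOf (G.sum H) (sumFn G H γG γH) (p1, p2) =
            (fun d => d ^^^ b) '' exitsOf G γG p1 := sum_exits_right hg hh
        set mG := mex (exitsOf G γG p1) with hmG
        have hvD : μ ^^^ b ∉ exitsOf G γG p1 := by
          intro hmem
          have : μ ∈ exitsOf (G.sum H) (sumFn G H γG γH) (p1, p2) := by
            rw [hE]
            exact ⟨μ ^^^ b, hmem, Nat.xor_xor_cancel_right μ b⟩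
          exact mex_notMem (exitsOf_finite _ _ _) this
        by_cases hvm : μ ^^^ b = mG
        · obtain ⟨x₀, hx₀a, hx₀n, hx₀z⟩ := hG.c3' hg
          refine ⟨(x₀, p2), Or.inl ⟨hx₀a, rfl⟩, ?_, ?_⟩
          · intro k hk
            rw [sumFn_none_left hx₀n] at hk
            exact nomatch hk
          · rintro ⟨r1, r2⟩ hr hrv
            rcases sum_adj.mp hr with ⟨h1, h2⟩ | ⟨h1, h2⟩
            · simp only at h1 h2
              obtain ⟨a1, b1, ha1, hb1, he1⟩ := sumFn_eq_some hrv
              simp only at ha1 hb1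
              rw [← h2, hh] at hb1
              injection hb1 with hb1
              subst hb1
              have : a1 = μ ^^^ b := by
                rw [he1, Nat.xor_xor_cancel_right]
              rw [hvm] at this
              subst this
              exact hx₀z r1 h1 ha1
            · simp only at h1 h2
              rw [sumFn_none_left (by rw [← h2]; exact hx₀n)] at hrv
              exact nomatch hrv
        · have hmlt : mG < μ ^^^ b := lt_of_le_of_ne (mex_le hvD) (Ne.symm hvm)
          have h1 : μ < mG ^^^ b := by
            rcases lt_trichotomy μ (mG ^^^ b) with h | h | h
            · exact h
            · exfalso
              apply hvm
              rw [h, Nat.xor_xor_cancel_right]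
            · exfalso
              have : mG ^^^ b ∈ exitsOf (G.sum H) (sumFn G H γG γH) (p1, p2) :=
                mem_of_lt_mex h
              rw [hE] at this
              obtain ⟨d, hd, hde⟩ := this
              have : d = mG := by rwa [Nat.xor_left_inj] at hde
              subst this
              exact mex_notMem (exitsOf_finite G γG p1) hd
          have h2 : μ ^^^ mG < b := by
            rcases Nat.lt_xor_cases h1 with h | h
            · exfalso
              omega
            · exact h
          obtain ⟨y', hy'a, hy'v, -⟩ := hH.c1 hh _ h2
          refine ⟨(p1, y'), Or.inr ⟨hy'a, rfl⟩, ?_, ?_⟩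
          · intro k hk
            rw [sumFn_none_left hg] at hk
            exact nomatch hk
          · rintro ⟨r1, r2⟩ hr hrv
            rcases sum_adj.mp hr with ⟨hr1, hr2⟩ | ⟨hr1, hr2⟩
            · simp only at hr1 hr2
              obtain ⟨a1, b1, ha1, hb1, he1⟩ := sumFn_eq_some hrv
              simp only at ha1 hb1
              rw [← hr2, hy'v] at hb1
              injection hb1 with hb1
              subst hb1
              have ha1v : a1 = mG := by
                have h3 : a1 = μ ^^^ (μ ^^^ mG) := xor_solve_left he1
                rwa [Nat.xor_xor_cancel_left] at h3
              rw [ha1v] at ha1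
              have : mG ∈ exitsOf G γG p1 := ⟨r1, hr1, ha1⟩
              exact mex_notMem (exitsOf_finite G γG p1) this
            · simp only at hr1 hr2
              rw [sumFn_none_left (by rw [← hr2]; exact hg)] at hrv
              exact nomatch hrv
    | some a =>
      cases hh : γH p2 with
      | none =>
        have hE : exitsOf (G.sum H) (sumFn G H γG γH) (p1, p2) =
            (fun d => a ^^^ d) '' exitsOf H γH p2 := sum_exits_left hg hh
        set mH := mex (exitsOf H γH p2) with hmH
        have hvD : a ^^^ μ ∉ exitsOf H γH p2 := by
          intro hmem
          have : μ ∈ exitsOf (G.sum H) (sumFn G H γG γH) (p1, p2) := by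
            rw [hE]
            exact ⟨a ^^^ μ, hmem, Nat.xor_xor_cancel_left a μ⟩
          exact mex_notMem (exitsOf_finite _ _ _) this
        by_cases hvm : a ^^^ μ = mH
        · obtain ⟨y₀, hy₀a, hy₀n, hy₀z⟩ := hH.c3' hh
          refine ⟨(p1, y₀), Or.inr ⟨hy₀a, rfl⟩, ?_, ?_⟩
          · intro k hk
            rw [sumFn_none_right hy₀n] at hk
            exact nomatch hk
          · rintro ⟨r1, r2⟩ hr hrv
            rcases sum_adj.mp hr with ⟨h1, h2⟩ | ⟨h1, h2⟩
            · simp only at h1 h2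
              rw [sumFn_none_right (by rw [← h2]; exact hy₀n)] at hrv
              exact nomatch hrv
            · simp only at h1 h2
              obtain ⟨a1, b1, ha1, hb1, he1⟩ := sumFn_eq_some hrv
              simp only at ha1 hb1
              rw [← h2, hg] at ha1
              injection ha1 with ha1
              subst ha1
              have : b1 = a ^^^ μ := by
                rw [he1, Nat.xor_xor_cancel_left]
              rw [hvm] at this
              subst this
              exact hy₀z r2 h1 hb1
        · have hmlt : mH < a ^^^ μ := lt_of_le_of_ne (mex_le hvD) (Ne.symm hvm)
          have h1 : μ < a ^^^ mH := by
            rcases lt_trichotomy μ (a ^^^ mH) with h | h | h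
            · exact h
            · exfalso
              apply hvm
              rw [h, Nat.xor_xor_cancel_left]
            · exfalso
              have : a ^^^ mH ∈ exitsOf (G.sum H) (sumFn G H γG γH) (p1, p2) :=
                mem_of_lt_mex h
              rw [hE] at this
              obtain ⟨d, hd, hde⟩ := this
              have : d = mH := by rwa [Nat.xor_right_inj] at hde
              subst this
              exact mex_notMem (exitsOf_finite H γH p2) hd
          have h2 : μ ^^^ mH < a := by
            rcases Nat.lt_xor_cases h1 with h | h
            · exact h
            · exfalso
              rw [show μ ^^^ a = a ^^^ μ from Nat.xor_comm _ _] at h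
              omega
          obtain ⟨x', hx'a, hx'v, -⟩ := hG.c1 hg _ h2
          refine ⟨(x', p2), Or.inl ⟨hx'a, rfl⟩, ?_, ?_⟩
          · intro k hk
            rw [sumFn_none_right hh] at hk
            exact nomatch hk
          · rintro ⟨r1, r2⟩ hr hrv
            rcases sum_adj.mp hr with ⟨hr1, hr2⟩ | ⟨hr1, hr2⟩
            · simp only at hr1 hr2
              rw [sumFn_none_right (by rw [← hr2]; exact hh)] at hrv
              exact nomatch hrv
            · simp only at hr1 hr2
              obtain ⟨a1, b1, ha1, hb1, he1⟩ := sumFn_eq_some hrv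
              simp only at ha1 hb1
              rw [← hr2, hx'v] at ha1
              injection ha1 with ha1
              subst ha1
              have hb1v : b1 = mH := by
                have h3 : b1 = (μ ^^^ mH) ^^^ μ := xor_solve_right he1
                rwa [Nat.xor_comm μ mH, Nat.xor_xor_cancel_right] at h3
              rw [hb1v] at hb1
              have : mH ∈ exitsOf H γH p2 := ⟨r2, hr1, hb1⟩
              exact mex_notMem (exitsOf_finite H γH p2) this
      | some b =>
        exfalso
        rw [sumFn_some hg hh] at hp
        exact nomatch hp

end SumLemmas

end CycGame

theorem sum_finite_cyclic' (G H : CycGame) (x : G.V) (y : H.V) (m : ℕ)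
    (hG : G.smith x = some m) (hH : H.smith y = none) :
    (G.sum H).smith (x, y) = none ∧
    (G.sum H).exits (x, y) = (fun d => m ^^^ d) '' H.exits y ∧
    ((G.sum H).NPos (x, y) ↔ m ∈ H.exits y) := by
  have SG := G.smith_spec
  have SH := H.smith_spec
  have SS := (G.sum H).smith_spec
  have SL := CycGame.sum_spec SG SH G.stg_le H.stg_le
  have heq : (G.sum H).smith = CycGame.sumFn G H G.smith H.smith := SS.eq SL
  have h1 : (G.sum H).smith (x, y) = none := by
    rw [heq]; exact CycGame.sumFn_none_right hH
  have h2 : (G.sum H).exits (x, y) = (fun d => m ^^^ d) '' H.exits y := by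
    exact (congrArg (fun g => CycGame.exitsOf (G.sum H) g (x, y)) heq).trans
      (CycGame.sum_exits_left hG hH)
  refine ⟨h1, h2, ?_⟩
  constructor
  · intro hnp
    rcases SS.npos_char hnp with ⟨c, hc, hcs⟩ | ⟨-, h0⟩
    · rw [h1] at hcs; exact nomatch hcs
    · change (0:ℕ) ∈ (G.sum H).exits (x, y) at h0; rw [h2] at h0
      obtain ⟨d, hd, hd0⟩ := h0
      have hdm : m = d := Nat.xor_eq_zero_iff.mp hd0
      rwa [hdm]
  · intro hm
    apply SS.npos_of_zero_exit
    show (0 : ℕ) ∈ CycGame.exitsOf (G.sum H) (G.sum H).smith (x, y)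
    change (0:ℕ) ∈ (G.sum H).exits (x, y); rw [h2]
    exact ⟨m, hm, Nat.xor_self m⟩


/-- If `G` has finite Grundy value `m` and `H` lies in a cyclic zone with
Grundy value `∞_D`, then `G + H` has Grundy value `∞_{m ⊕ D}`: it is in a
cyclic zone and its exit set is `m ⊕ D`.  Consequently `G + H` is an
N-position iff `m ∈ D`. -/
theorem sum_finite_cyclic (G H : CycGame) (x : G.V) (y : H.V) (m : ℕ)
    (hG : G.smith x = some m) (hH : H.smith y = none) :
    (G.sum H).smith (x, y) = none ∧
    (G.sum H).exits (x, y) = (fun d => m ^^^ d) '' H.exits y ∧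
    ((G.sum H).NPos (x, y) ↔ m ∈ H.exits y) := by
  exact sum_finite_cyclic' G H x y m hG hH
end
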